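/- For every integer n ≥ 1, every integer k ≥ 2, and every probability vector P ∈ M_k with all p_i > 0, the variance of the KL divergence of the empirical distribution from the true distribution satisfies Var[D(P̂_{n,k}‖P)] ≤ 6·(3 + log k)²/n. -/

import Mathlib

/-- The empirical distribution of `n` samples `ω : Fin n → Fin k`. -/
noncomputable def empDist {n k : ℕ} (ω : Fin n → Fin k) (i : Fin k) : ℝ :=
  ((Finset.univ.filter (fun j => ω j = i)).card : ℝ) / n

open Classical in
/-- Probability of the event `E` under `n` i.i.d. samples from the distribution `p` on `Fin k`. -/
noncomputable def probOf {n k : ℕ} (p : Fin k → ℝ) (E : Set (Fin n → Fin k)) : ℝ :=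
  ∑ ω : Fin n → Fin k, if ω ∈ E then ∏ j, p (ω j) else 0

/-- Kullback–Leibler divergence `D(q ‖ p)` (with the convention `0 · log 0 = 0`,
which holds automatically since `Real.log 0 = 0`). -/
noncomputable def klDiv {k : ℕ} (q p : Fin k → ℝ) : ℝ :=
  ∑ i, q i * Real.log (q i / p i)

/-- Expectation of `f` under `n` i.i.d. samples from the distribution `p` on `Fin k`. -/
noncomputable def expect {n k : ℕ} (p : Fin k → ℝ) (f : (Fin n → Fin k) → ℝ) : ℝ :=
  ∑ ω : Fin n → Fin k, (∏ j, p (ω j)) * f ω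

/-- Variance of `f` under `n` i.i.d. samples from the distribution `p` on `Fin k`. -/
noncomputable def var {n k : ℕ} (p : Fin k → ℝ) (f : (Fin n → Fin k) → ℝ) : ℝ :=
  expect p (fun ω => (f ω - expect p f) ^ 2)

namespace KLVar

variable {k : ℕ} (p : Fin k → ℝ)

noncomputable def w {n : ℕ} (ω : Fin n → Fin k) : ℝ := ∏ j, p (ω j)

lemma expect_def {n : ℕ} (f : (Fin n → Fin k) → ℝ) :
    expect p f = ∑ ω : Fin n → Fin k, w p ω * f ω := rfl

lemma sum_cons {N : ℕ} (F : (Fin (N+1) → Fin k) → ℝ) :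
    ∑ ω : Fin (N+1) → Fin k, F ω = ∑ a : Fin k, ∑ σ : Fin N → Fin k, F (Fin.cons a σ) := by
  rw [← Equiv.sum_comp (Fin.consEquiv (fun _ => Fin k)) F, Fintype.sum_prod_type]
  rfl

lemma w_cons {N : ℕ} (a : Fin k) (σ : Fin N → Fin k) :
    w p (Fin.cons a σ) = p a * w p σ := by
  simp [w, Fin.prod_univ_succ]

lemma w_nonneg (hnn : ∀ i, 0 ≤ p i) {n : ℕ} (ω : Fin n → Fin k) : 0 ≤ w p ω :=
  Finset.prod_nonneg fun j _ => hnn _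

lemma sum_w (hsum : ∑ i, p i = 1) : ∀ n : ℕ, ∑ ω : Fin n → Fin k, w p ω = 1 := by
  intro n
  induction n with
  | zero => simp [w]
  | succ N ih =>
    rw [sum_cons]
    calc ∑ a : Fin k, ∑ σ : Fin N → Fin k, w p (Fin.cons a σ)
        = ∑ a : Fin k, p a * ∑ σ : Fin N → Fin k, w p σ := by
          refine Finset.sum_congr rfl fun a _ => ?_
          rw [Finset.mul_sum]
          exact Finset.sum_congr rfl fun σ _ => w_cons p a σ
      _ = 1 := by rw [ih]; simpa using hsum

/-- Weighted sum-of-squares expansion around an arbitrary center. -/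
lemma wsum_center {ι : Type*} [Fintype ι] (q v : ι → ℝ) (h1 : ∑ a, q a = 1) (c : ℝ) :
    ∑ a, q a * (v a - c)^2
      = (∑ a, q a * v a^2) - 2*c*(∑ a, q a * v a) + c^2 := by
  have : ∀ a : ι, q a * (v a - c)^2 = q a * v a^2 - 2*c*(q a * v a) + c^2 * q a := by
    intro a; ring
  rw [Finset.sum_congr rfl fun a _ => this a, Finset.sum_add_distrib, Finset.sum_sub_distrib,
    ← Finset.mul_sum, ← Finset.mul_sum, h1]
  ring

lemma jensen_sq {ι : Type*} [Fintype ι] (q v : ι → ℝ) (hnn : ∀ a, 0 ≤ q a)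
    (h1 : ∑ a, q a = 1) : (∑ a, q a * v a)^2 ≤ ∑ a, q a * v a^2 := by
  have h := Finset.sum_nonneg (fun a (_ : a ∈ Finset.univ) =>
    mul_nonneg (hnn a) (sq_nonneg (v a - ∑ b, q b * v b)))
  rw [wsum_center q v h1 (∑ b, q b * v b)] at h
  nlinarith [h]

lemma wvar_double {ι : Type*} [Fintype ι] (q v : ι → ℝ) (h1 : ∑ a, q a = 1) :
    ∑ a, q a * (v a - ∑ b, q b * v b)^2
      = 1/2 * ∑ a, ∑ b, q a * q b * (v a - v b)^2 := by
  have expand : ∀ a : ι, ∑ b, q a * q b * (v a - v b)^2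
      = q a * v a^2 + q a * (∑ b, q b * v b^2) - 2 * (q a * v a) * (∑ b, q b * v b) := by
    intro a
    have : ∀ b : ι, q a * q b * (v a - v b)^2
        = (q a * v a^2) * q b + q a * (q b * v b^2) - 2 * (q a * v a) * (q b * v b) := by
      intro b; ring
    rw [Finset.sum_congr rfl fun b _ => this b, Finset.sum_sub_distrib, Finset.sum_add_distrib,
      ← Finset.mul_sum, ← Finset.mul_sum, ← Finset.mul_sum, h1]
    ring
  rw [Finset.sum_congr rfl fun a _ => expand a, wsum_center q v h1,
    Finset.sum_sub_distrib, Finset.sum_add_distrib, ← Finset.sum_mul, ← Finset.sum_mul,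
    ← Finset.mul_sum, h1]
  ring


theorem efron_stein (hnn : ∀ i, 0 ≤ p i) (hsum : ∑ i, p i = 1) :
    ∀ (n : ℕ) (f : (Fin n → Fin k) → ℝ),
    var p f ≤ 1/2 * ∑ j : Fin n, ∑ ω : Fin n → Fin k,
      w p ω * ∑ x : Fin k, p x * (f ω - f (Function.update ω j x))^2 := by
  intro n
  induction n with
  | zero =>
    intro f
    have h1 : ∀ (g : (Fin 0 → Fin k) → ℝ), expect p g = g (fun i => i.elim0) := by
      intro g
      rw [expect, Fintype.sum_unique]
      simp
      congr
    rw [var, h1, h1]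
    simp
  | succ N ih =>
    intro f
    set g : (Fin N → Fin k) → ℝ := fun σ => ∑ a, p a * f (Fin.cons a σ) with hg
    have hEg : expect p f = expect p g := by
      rw [expect_def, expect_def, sum_cons (fun ω => w p ω * f ω), Finset.sum_comm]
      refine Finset.sum_congr rfl fun σ _ => ?_
      rw [hg, Finset.mul_sum]
      exact Finset.sum_congr rfl fun a _ => by rw [w_cons]; ring
    -- law of total variance
    have key : var p f = (∑ σ : Fin N → Fin k, w p σ * ∑ a, p a * (f (Fin.cons a σ) - g σ)^2)
        + var p g := by
      have expand : ∀ σ : Fin N → Fin k,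
          ∑ a, p a * (f (Fin.cons a σ) - expect p f)^2
            = (∑ a, p a * (f (Fin.cons a σ) - g σ)^2) + (g σ - expect p g)^2 := by
        intro σ
        rw [hEg, wsum_center p _ hsum (expect p g), wsum_center p _ hsum (g σ)]
        have h2 : g σ = ∑ a, p a * f (Fin.cons a σ) := rfl
        rw [h2]
        ring
      rw [var, expect_def p (fun ω => (f ω - expect p f)^2),
        sum_cons (fun ω => w p ω * (f ω - expect p f)^2), Finset.sum_comm]
      have step : ∀ σ : Fin N → Fin k,
          ∑ a, w p (Fin.cons a σ) * (f (Fin.cons a σ) - expect p f)^2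
            = w p σ * ∑ a, p a * (f (Fin.cons a σ) - expect p f)^2 := by
        intro σ
        rw [Finset.mul_sum]
        exact Finset.sum_congr rfl fun a _ => by rw [w_cons]; ring
      rw [Finset.sum_congr rfl fun σ _ => step σ]
      rw [Finset.sum_congr rfl fun σ _ => by rw [expand σ]]
      rw [Finset.sum_congr rfl (fun (σ : Fin N → Fin k) _ => mul_add (w p σ) _ _),
        Finset.sum_add_distrib]
      congr 1
    -- the zero-coordinate term
    have term0 : ∑ σ : Fin N → Fin k, w p σ * ∑ a, p a * (f (Fin.cons a σ) - g σ)^2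
        = 1/2 * ∑ ω : Fin (N+1) → Fin k,
            w p ω * ∑ x, p x * (f ω - f (Function.update ω 0 x))^2 := by
      rw [sum_cons (fun ω => w p ω * ∑ x, p x * (f ω - f (Function.update ω 0 x))^2),
        Finset.sum_comm, Finset.mul_sum]
      refine Finset.sum_congr rfl fun σ _ => ?_
      rw [show (∑ a, p a * (f (Fin.cons a σ) - g σ)^2)
          = 1/2 * ∑ a, ∑ b, p a * p b * (f (Fin.cons a σ) - f (Fin.cons b σ))^2 from
        wvar_double p (fun a => f (Fin.cons a σ)) hsum]
      simp only [Fin.update_cons_zero, w_cons, Finset.mul_sum]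
      exact Finset.sum_congr rfl fun a _ => Finset.sum_congr rfl fun b _ => by ring
    -- the successor-coordinate terms, via Jensen
    have succle : ∀ j : Fin N,
        (∑ σ : Fin N → Fin k, w p σ * ∑ x, p x * (g σ - g (Function.update σ j x))^2)
          ≤ ∑ ω : Fin (N+1) → Fin k,
              w p ω * ∑ x, p x * (f ω - f (Function.update ω j.succ x))^2 := by
      intro j
      rw [sum_cons (fun ω => w p ω * ∑ x, p x * (f ω - f (Function.update ω j.succ x))^2),
        Finset.sum_comm]
      refine Finset.sum_le_sum fun σ _ => ?_
      have h3 : ∑ a, w p (Fin.cons a σ)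
            * ∑ x, p x * (f (Fin.cons a σ) - f (Function.update (Fin.cons a σ) j.succ x))^2
          = w p σ * ∑ x, p x * ∑ a, p a
              * (f (Fin.cons a σ) - f (Fin.cons a (Function.update σ j x)))^2 := by
        simp only [← Fin.cons_update, w_cons, Finset.mul_sum]
        rw [Finset.sum_comm]
        exact Finset.sum_congr rfl fun a _ => Finset.sum_congr rfl fun x _ => by ring
      rw [h3]
      refine mul_le_mul_of_nonneg_left ?_ (w_nonneg p hnn σ)
      refine Finset.sum_le_sum fun x _ => ?_
      refine mul_le_mul_of_nonneg_left ?_ (hnn x)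
      have h4 : g σ - g (Function.update σ j x)
          = ∑ a, p a * (f (Fin.cons a σ) - f (Fin.cons a (Function.update σ j x))) := by
        rw [hg]
        simp only [Finset.sum_sub_distrib, mul_sub]
      rw [h4]
      exact jensen_sq p _ hnn hsum
    -- combine
    rw [key, term0, Fin.sum_univ_succ, mul_add]
    gcongr ?_ + ?_
    · exact le_of_eq rfl
    · calc var p g ≤ 1/2 * ∑ j : Fin N, ∑ σ : Fin N → Fin k,
            w p σ * ∑ x, p x * (g σ - g (Function.update σ j x))^2 := ih g
        _ ≤ 1/2 * ∑ j : Fin N, ∑ ω : Fin (N+1) → Fin k,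
            w p ω * ∑ x, p x * (f ω - f (Function.update ω j.succ x))^2 := by
            have := Finset.sum_le_sum fun (j : Fin N) (_ : j ∈ Finset.univ) => succle j
            linarith

def cnt (i : Fin k) {n : ℕ} (ω : Fin n → Fin k) : ℕ :=
  (Finset.univ.filter fun j => ω j = i).card

lemma cnt_cast {n : ℕ} (i : Fin k) (ω : Fin n → Fin k) :
    (cnt i ω : ℝ) = ∑ j, if ω j = i then (1:ℝ) else 0 := by
  rw [cnt, Finset.card_filter]
  push_cast
  rfl

lemma empDist_eq {n : ℕ} (ω : Fin n → Fin k) (i : Fin k) :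
    empDist ω i = (cnt i ω : ℝ) / n := rfl

lemma cnt_cons {N : ℕ} (i a : Fin k) (σ : Fin N → Fin k) :
    cnt i (Fin.cons a σ) = (if a = i then 1 else 0) + cnt i σ := by
  simp only [cnt, Finset.card_filter, Fin.sum_univ_succ, Fin.cons_zero, Fin.cons_succ]

lemma cnt_le {N : ℕ} (i : Fin k) (σ : Fin N → Fin k) : cnt i σ ≤ N := by
  simpa [cnt] using Finset.card_filter_le Finset.univ (fun j => σ j = i)

lemma cnt_comp {n : ℕ} (i : Fin k) (ω : Fin n → Fin k) (e : Equiv.Perm (Fin n)) :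
    cnt i (ω ∘ e) = cnt i ω := by
  have : ∀ τ : Fin n → Fin k, (cnt i τ : ℕ) = ∑ j, if τ j = i then 1 else 0 := fun τ => by
    rw [cnt, Finset.card_filter]
  rw [this, this]
  exact Equiv.sum_comp e (fun j => if ω j = i then 1 else 0)

lemma empDist_comp {n : ℕ} (ω : Fin n → Fin k) (e : Equiv.Perm (Fin n)) :
    empDist (ω ∘ e) = empDist ω := by
  funext i
  rw [empDist_eq, empDist_eq, cnt_comp]

lemma w_comp {n : ℕ} (ω : Fin n → Fin k) (e : Equiv.Perm (Fin n)) :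
    w p (ω ∘ e) = w p ω :=
  Equiv.prod_comp e (fun j => p (ω j))

lemma sum_comp_perm {n : ℕ} (e : Equiv.Perm (Fin n)) (F : (Fin n → Fin k) → ℝ) :
    ∑ ω : Fin n → Fin k, F ω = ∑ ω : Fin n → Fin k, F (ω ∘ e) := by
  exact (Fintype.sum_bijective (fun ω : Fin n → Fin k => ω ∘ e)
    (Equiv.arrowCongr e.symm (Equiv.refl (Fin k))).bijective _ _ (fun ω => rfl)).symm

lemma update_comp {n : ℕ} (ω : Fin n → Fin k) (e : Equiv.Perm (Fin n)) (j : Fin n) (x : Fin k) :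
    (Function.update ω (e j) x) ∘ e = Function.update (ω ∘ e) j x := by
  funext m
  rcases eq_or_ne m j with rfl | hm
  · simp
  · simp only [Function.comp_apply, Function.update_of_ne hm,
      Function.update_of_ne (fun h => hm (e.injective h)), Function.comp_apply]

/-- `E[n·pᵢ/(cntᵢ+1)] ≤ 1` over `N` i.i.d. coordinates, `n = N+1`. -/
lemma exp_inv_cnt (hnn : ∀ i, 0 ≤ p i) (hsum : ∑ i, p i = 1) (N : ℕ) (i : Fin k) :
    ((N:ℝ)+1) * p i * ∑ σ : Fin N → Fin k, w p σ * (1/((cnt i σ : ℝ) + 1)) ≤ 1 := by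
  have key : ∀ j : Fin (N+1),
      ∑ ω : Fin (N+1) → Fin k, w p ω * ((if ω j = i then (1:ℝ) else 0)/(cnt i ω : ℝ))
        = p i * ∑ σ : Fin N → Fin k, w p σ * (1/((cnt i σ : ℝ) + 1)) := by
    intro j
    rw [sum_comp_perm (Equiv.swap 0 j)
      (fun ω => w p ω * ((if ω j = i then (1:ℝ) else 0)/(cnt i ω : ℝ)))]
    have e0 : ∀ ω : Fin (N+1) → Fin k, (ω ∘ (Equiv.swap 0 j)) j = ω 0 := by
      intro ω; simp [Equiv.swap_apply_right]
    calc ∑ ω : Fin (N+1) → Fin k, w p (ω ∘ (Equiv.swap 0 j))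
          * ((if (ω ∘ (Equiv.swap 0 j)) j = i then (1:ℝ) else 0)/(cnt i (ω ∘ (Equiv.swap 0 j)) : ℝ))
        = ∑ ω : Fin (N+1) → Fin k, w p ω * ((if ω 0 = i then (1:ℝ) else 0)/(cnt i ω : ℝ)) := by
          refine Finset.sum_congr rfl fun ω _ => ?_
          rw [w_comp, cnt_comp, e0]
      _ = ∑ a, ∑ σ : Fin N → Fin k, w p (Fin.cons a σ)
            * ((if a = i then (1:ℝ) else 0)/(cnt i (Fin.cons a σ) : ℝ)) := by
          rw [sum_cons (fun ω => w p ω * ((if ω 0 = i then (1:ℝ) else 0)/(cnt i ω : ℝ)))]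
          simp only [Fin.cons_zero]
      _ = p i * ∑ σ : Fin N → Fin k, w p σ * (1/((cnt i σ : ℝ) + 1)) := by
          have claim : ∀ a : Fin k, (∑ σ : Fin N → Fin k, w p (Fin.cons a σ)
              * ((if a = i then (1:ℝ) else 0)/(cnt i (Fin.cons a σ) : ℝ)))
            = if a = i then p i * ∑ σ : Fin N → Fin k, w p σ * (1/((cnt i σ : ℝ) + 1)) else 0 := by
            intro a
            rcases eq_or_ne a i with rfl | ha
            · simp only [eq_self_iff_true, if_true]
              rw [Finset.mul_sum]
              refine Finset.sum_congr rfl fun σ _ => ?_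
              rw [w_cons, cnt_cons]
              simp only [eq_self_iff_true, if_true]
              push_cast
              ring
            · simp [ha]
          rw [Finset.sum_congr rfl fun a _ => claim a, Finset.sum_ite_eq' Finset.univ i]
          simp
  -- sum over j
  have hA : ∑ ω : Fin (N+1) → Fin k, w p ω * ((cnt i ω : ℝ)/(cnt i ω : ℝ)) ≤ 1 := by
    calc ∑ ω : Fin (N+1) → Fin k, w p ω * ((cnt i ω : ℝ)/(cnt i ω : ℝ))
        ≤ ∑ ω : Fin (N+1) → Fin k, w p ω * 1 := by
          refine Finset.sum_le_sum fun ω _ => ?_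
          refine mul_le_mul_of_nonneg_left ?_ (w_nonneg p hnn ω)
          exact div_self_le_one _
      _ = 1 := by simp only [mul_one]; exact sum_w p hsum (N+1)
  have hsplit : ∑ ω : Fin (N+1) → Fin k, w p ω * ((cnt i ω : ℝ)/(cnt i ω : ℝ))
      = ∑ j : Fin (N+1), ∑ ω : Fin (N+1) → Fin k,
          w p ω * ((if ω j = i then (1:ℝ) else 0)/(cnt i ω : ℝ)) := by
    rw [Finset.sum_comm]
    refine Finset.sum_congr rfl fun ω _ => ?_
    rw [← Finset.mul_sum, ← Finset.sum_div, ← cnt_cast]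
  rw [hsplit] at hA
  rw [Finset.sum_congr rfl (fun (j : Fin (N+1)) _ => key j), Finset.sum_const,
    Finset.card_univ, Fintype.card_fin, nsmul_eq_mul] at hA
  calc ((N:ℝ)+1) * p i * ∑ σ : Fin N → Fin k, w p σ * (1/((cnt i σ : ℝ) + 1))
      = ((N:ℝ)+1) * (p i * ∑ σ : Fin N → Fin k, w p σ * (1/((cnt i σ : ℝ) + 1))) := by ring
    _ ≤ 1 := by push_cast at hA ⊢; linarith


noncomputable def hh (n : ℕ) (pi : ℝ) (m : ℕ) : ℝ :=
  ((m:ℝ)/n) * Real.log (((m:ℝ)/n)/pi)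

noncomputable def dd (n : ℕ) (pi : ℝ) (m : ℕ) : ℝ := hh n pi (m+1) - hh n pi m

lemma klDiv_empDist {n : ℕ} (ω : Fin n → Fin k) :
    klDiv (empDist ω) p = ∑ i, hh n (p i) (cnt i ω) := rfl

lemma D_diff {N : ℕ} (a b : Fin k) (σ : Fin N → Fin k) :
    klDiv (empDist (Fin.cons a σ)) p - klDiv (empDist (Fin.cons b σ)) p
      = dd (N+1) (p a) (cnt a σ) - dd (N+1) (p b) (cnt b σ) := by
  rw [klDiv_empDist, klDiv_empDist, ← Finset.sum_sub_distrib]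
  have point : ∀ i : Fin k,
      hh (N+1) (p i) (cnt i (Fin.cons a σ)) - hh (N+1) (p i) (cnt i (Fin.cons b σ))
      = (if a = i then dd (N+1) (p i) (cnt i σ) else 0)
        - (if b = i then dd (N+1) (p i) (cnt i σ) else 0) := by
    intro i
    rw [cnt_cons, cnt_cons]
    by_cases ha : a = i <;> by_cases hb : b = i
    · rw [if_pos ha, if_pos hb, if_pos ha, if_pos hb]; ring
    · rw [if_pos ha, if_neg hb, if_pos ha, if_neg hb, dd, Nat.zero_add,
        Nat.add_comm 1 (cnt i σ), sub_zero]
    · rw [if_neg ha, if_pos hb, if_neg ha, if_pos hb, dd, Nat.zero_add,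
        Nat.add_comm 1 (cnt i σ), zero_sub]
      ring
    · rw [if_neg ha, if_neg hb, if_neg ha, if_neg hb, Nat.zero_add]
      ring
  rw [Finset.sum_congr rfl fun i _ => point i, Finset.sum_sub_distrib,
    Finset.sum_ite_eq Finset.univ a, Finset.sum_ite_eq Finset.univ b]
  simp

lemma log_sq_le (x : ℝ) (hx : 1 ≤ x) : (Real.log x)^2 * (Real.exp 1)^2 ≤ 4 * x := by
  have hx0 : 0 < x := lt_of_lt_of_le one_pos hx
  set t := Real.log x / 2 with ht
  have hlog : 0 ≤ Real.log x := Real.log_nonneg hx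
  have ht0 : 0 ≤ t := by rw [ht]; linarith
  have h1 : Real.exp 1 * t ≤ Real.exp t := by
    have h := Real.add_one_le_exp (t - 1)
    calc Real.exp 1 * t ≤ Real.exp 1 * Real.exp (t-1) := by
          refine mul_le_mul_of_nonneg_left ?_ (le_of_lt (Real.exp_pos 1))
          linarith
      _ = Real.exp t := by rw [← Real.exp_add]; ring_nf
  have h2 : (Real.exp t)^2 = x := by
    rw [sq, ← Real.exp_add, ht]
    have : Real.log x / 2 + Real.log x / 2 = Real.log x := by ring
    rw [this, Real.exp_log hx0]
  have h3 : (Real.exp 1 * t)^2 ≤ (Real.exp t)^2 :=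
    pow_le_pow_left₀ (mul_nonneg (le_of_lt (Real.exp_pos 1)) ht0) h1 2
  rw [h2] at h3
  have : (Real.exp 1 * t)^2 = (Real.log x)^2 * (Real.exp 1)^2 / 4 := by rw [ht]; ring
  rw [this] at h3
  linarith

lemma max_log_sq_le (y : ℝ) (hy : 0 < y) :
    (max 0 (Real.log y))^2 * (Real.exp 1)^2 ≤ 4 * y := by
  rcases le_or_gt 1 y with h | h
  · rw [max_eq_right (Real.log_nonneg h)]; exact log_sq_le y h
  · rw [max_eq_left (Real.log_nonpos (le_of_lt hy) (le_of_lt h))]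
    have : (0:ℝ) ≤ 4 * y := by linarith
    simpa using this

lemma dd_sq_le (N : ℕ) (pi : ℝ) (hp : 0 < pi) (hp1 : pi ≤ 1) (m : ℕ) (hm : m ≤ N) :
    (dd (N+1) pi m)^2 * ((N:ℝ)+1)^2
      ≤ (max 0 (Real.log (((N:ℝ)+1) * pi / ((m:ℝ)+1))))^2 + (1 + Real.log (1/pi))^2 := by
  set n : ℝ := (N:ℝ)+1 with hndef
  have hn0 : 0 < n := by positivity
  have hn1 : 1 ≤ n := by rw [hndef]; have : (0:ℝ) ≤ (N:ℝ) := Nat.cast_nonneg N; linarith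
  have hlogn : 0 ≤ Real.log n := Real.log_nonneg hn1
  have hlogpi : Real.log pi ≤ 0 := Real.log_nonpos (le_of_lt hp) hp1
  set c : ℝ := dd (N+1) pi m * n with hcdef
  set T : ℝ := max 0 (Real.log (n * pi / ((m:ℝ)+1))) with hTdef
  set U : ℝ := 1 + Real.log (1/pi) with hUdef
  have hU : U = 1 - Real.log pi := by rw [hUdef, one_div, Real.log_inv]; ring
  have hT0 : 0 ≤ T := le_max_left _ _
  have hTlow : Real.log n + Real.log pi - Real.log ((m:ℝ)+1) ≤ T := by
    have : Real.log (n * pi / ((m:ℝ)+1))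
        = Real.log n + Real.log pi - Real.log ((m:ℝ)+1) := by
      rw [Real.log_div (by positivity) (by positivity), Real.log_mul (ne_of_gt hn0) (ne_of_gt hp)]
    rw [← this]
    exact le_max_right _ _
  have hc : c = ((m:ℝ)+1) * Real.log ((((m:ℝ)+1)/n)/pi) - (m:ℝ) * Real.log (((m:ℝ)/n)/pi) := by
    rw [hcdef, dd, hh, hh]
    push_cast
    field_simp
    rw [mul_comm pi n, hndef]; ring
  have hcU : c ≤ U ∧ -T ≤ c := by
    rcases Nat.eq_zero_or_pos m with rfl | hm1
    · have : c = -(Real.log n + Real.log pi) := by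
        rw [hc]
        simp only [Nat.cast_zero, zero_add, zero_div, zero_mul, sub_zero, one_mul]
        rw [Real.log_div (by positivity) (ne_of_gt hp), Real.log_div one_ne_zero (ne_of_gt hn0),
          Real.log_one]
        ring
      constructor
      · rw [this, hU]; linarith
      · rw [this]
        simp only [Nat.cast_zero, zero_add] at hTlow
        rw [Real.log_one] at hTlow
        linarith
    · have hmR : (1:ℝ) ≤ (m:ℝ) := by exact_mod_cast hm1
      have hm0 : (0:ℝ) < (m:ℝ) := by linarith
      have l1 : Real.log (((m:ℝ)+1)/n/pi) = Real.log ((m:ℝ)+1) - Real.log n - Real.log pi := by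
        rw [Real.log_div (by positivity) (ne_of_gt hp), Real.log_div (by positivity) (ne_of_gt hn0)]
      have l2 : Real.log ((m:ℝ)/n/pi) = Real.log (m:ℝ) - Real.log n - Real.log pi := by
        rw [Real.log_div (by positivity) (ne_of_gt hp), Real.log_div (ne_of_gt hm0) (ne_of_gt hn0)]
      have hsplit : c = (Real.log ((m:ℝ)+1) - Real.log n)
          + (m:ℝ) * (Real.log ((m:ℝ)+1) - Real.log (m:ℝ)) - Real.log pi := by
        rw [hc, l1, l2]
        ring
      have hB0 : 0 ≤ Real.log ((m:ℝ)+1) - Real.log (m:ℝ) := by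
        have := Real.log_le_log hm0 (by linarith : (m:ℝ) ≤ (m:ℝ)+1)
        linarith
      have hB1 : (m:ℝ) * (Real.log ((m:ℝ)+1) - Real.log (m:ℝ)) ≤ 1 := by
        have h4 : Real.log (((m:ℝ)+1)/(m:ℝ)) ≤ ((m:ℝ)+1)/(m:ℝ) - 1 :=
          Real.log_le_sub_one_of_pos (by positivity)
        rw [Real.log_div (by positivity) (ne_of_gt hm0)] at h4
        have h5 : ((m:ℝ)+1)/(m:ℝ) - 1 = 1/(m:ℝ) := by field_simp; ring
        rw [h5] at h4
        calc (m:ℝ) * (Real.log ((m:ℝ)+1) - Real.log (m:ℝ)) ≤ (m:ℝ) * (1/(m:ℝ)) :=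
              mul_le_mul_of_nonneg_left h4 (le_of_lt hm0)
          _ = 1 := by field_simp
      have hA : Real.log ((m:ℝ)+1) - Real.log n ≤ 0 := by
        have hmn : (m:ℝ)+1 ≤ n := by
          rw [hndef]
          have : (m:ℝ) ≤ (N:ℝ) := by exact_mod_cast hm
          linarith
        have := Real.log_le_log (by positivity : (0:ℝ) < (m:ℝ)+1) hmn
        linarith
      have hmB0 : 0 ≤ (m:ℝ) * (Real.log ((m:ℝ)+1) - Real.log (m:ℝ)) :=
        mul_nonneg (le_of_lt hm0) hB0
      constructor
      · rw [hsplit, hU]; linarith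
      · rw [hsplit]; linarith
  have hsq : (dd (N+1) pi m)^2 * n^2 = c^2 := by rw [hcdef]; ring
  rw [hsq]
  rcases le_or_gt 0 c with h | h
  · nlinarith [hcU.1, hcU.2, sq_nonneg T]
  · nlinarith [hcU.1, hcU.2, sq_nonneg U, hT0]

lemma exp_mul_sq_decreasing {t s : ℝ} (ht : 1 ≤ t) (hts : t ≤ s) :
    Real.exp (-s) * (1+s)^2 ≤ Real.exp (-t) * (1+t)^2 := by
  set u := s - t with hu
  have hu0 : 0 ≤ u := by rw [hu]; linarith
  have h1 : 1 + s ≤ (1+t)*(1+u/2) := by nlinarith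
  have h2 : (1+u/2)^2 ≤ Real.exp u := by
    have h := Real.add_one_le_exp (u/2)
    calc (1+u/2)^2 ≤ (Real.exp (u/2))^2 :=
          pow_le_pow_left₀ (by linarith) (by linarith) 2
      _ = Real.exp u := by rw [sq, ← Real.exp_add]; ring_nf
  have h3 : (1+s)^2 ≤ (1+t)^2 * Real.exp u := by
    calc (1+s)^2 ≤ ((1+t)*(1+u/2))^2 := pow_le_pow_left₀ (by linarith) h1 2
      _ = (1+t)^2 * (1+u/2)^2 := by ring
      _ ≤ (1+t)^2 * Real.exp u := mul_le_mul_of_nonneg_left h2 (sq_nonneg _)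
  have h4 : Real.exp (-s) * Real.exp u = Real.exp (-t) := by
    rw [← Real.exp_add]
    congr 1
    rw [hu]; ring
  calc Real.exp (-s) * (1+s)^2 ≤ Real.exp (-s) * ((1+t)^2 * Real.exp u) :=
        mul_le_mul_of_nonneg_left h3 (le_of_lt (Real.exp_pos _))
    _ = (Real.exp (-s) * Real.exp u) * (1+t)^2 := by ring
    _ = Real.exp (-t) * (1+t)^2 := by rw [h4]

lemma sum_p_logsq_le (hpos : ∀ i, 0 < p i) (hsum : ∑ i, p i = 1) (hk : 1 ≤ k) :
    ∑ i, p i * (1 + Real.log (1/p i))^2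
      ≤ (1 + Real.exp (-3)) * (4 + Real.log k)^2 := by
  set t := 3 + Real.log (k:ℝ) with htdef
  have hk0 : (0:ℝ) < (k:ℝ) := by exact_mod_cast lt_of_lt_of_le Nat.zero_lt_one hk
  have hlogk : 0 ≤ Real.log (k:ℝ) := Real.log_nonneg (by exact_mod_cast hk)
  have ht1 : (1:ℝ) ≤ t := by rw [htdef]; linarith
  have hp1 : ∀ i, p i ≤ 1 := by
    intro i
    have h := Finset.single_le_sum (f := p) (fun j _ => le_of_lt (hpos j)) (Finset.mem_univ i)
    rw [hsum] at h
    exact h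
  have point : ∀ i, p i * (1 + Real.log (1/p i))^2
      ≤ p i * (4 + Real.log (k:ℝ))^2 + Real.exp (-t) * (1 + t)^2 := by
    intro i
    have hLnn : 0 ≤ Real.log (1/p i) := Real.log_nonneg (one_le_one_div (hpos i) (hp1 i))
    rcases le_or_gt (Real.exp (-t)) (p i) with h | h
    · have hlog : Real.log (1/p i) ≤ t := by
        rw [one_div, Real.log_inv]
        have h6 := Real.log_le_log (Real.exp_pos (-t)) h
        rw [Real.log_exp] at h6
        linarith
      have hsq : (1 + Real.log (1/p i))^2 ≤ (4 + Real.log (k:ℝ))^2 := by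
        have h7 : 1 + Real.log (1/p i) ≤ 4 + Real.log (k:ℝ) := by rw [htdef] at hlog; linarith
        exact pow_le_pow_left₀ (by linarith) h7 2
      nlinarith [mul_le_mul_of_nonneg_left hsq (le_of_lt (hpos i)), Real.exp_pos (-t),
        sq_nonneg (1+t)]
    · have hs : t ≤ Real.log (1/p i) := by
        rw [one_div, Real.log_inv]
        have h8 := Real.log_lt_log (hpos i) h
        rw [Real.log_exp] at h8
        linarith
      have key := exp_mul_sq_decreasing ht1 hs
      have hpi : Real.exp (-(Real.log (1/p i))) = p i := by
        rw [one_div, Real.log_inv, neg_neg, Real.exp_log (hpos i)]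
      rw [hpi] at key
      have hnn2 : 0 ≤ p i * (4 + Real.log (k:ℝ))^2 :=
        mul_nonneg (le_of_lt (hpos i)) (sq_nonneg _)
      linarith
  calc ∑ i, p i * (1 + Real.log (1/p i))^2
      ≤ ∑ i, (p i * (4 + Real.log (k:ℝ))^2 + Real.exp (-t) * (1+t)^2) :=
        Finset.sum_le_sum fun i _ => point i
    _ = (4 + Real.log (k:ℝ))^2 + (k:ℝ) * (Real.exp (-t) * (1+t)^2) := by
        rw [Finset.sum_add_distrib, ← Finset.sum_mul, hsum, Finset.sum_const,
          Finset.card_univ, Fintype.card_fin, nsmul_eq_mul]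
        ring
    _ ≤ (1 + Real.exp (-3)) * (4 + Real.log (k:ℝ))^2 := by
        have hke : (k:ℝ) * Real.exp (-t) = Real.exp (-3) := by
          rw [htdef, neg_add, Real.exp_add, Real.exp_neg (Real.log (k:ℝ)), Real.exp_log hk0]
          field_simp
        have h1t : (1:ℝ) + t = 4 + Real.log (k:ℝ) := by rw [htdef]; ring
        have : (k:ℝ) * (Real.exp (-t) * (1+t)^2) = Real.exp (-3) * (4 + Real.log (k:ℝ))^2 := by
          rw [← mul_assoc, hke, h1t]
        rw [this]
        ring_nf
        linarith [sq_nonneg (4 + Real.log (k:ℝ))]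


lemma sum_mul_left {ι : Type*} [Fintype ι] (q v : ι → ℝ) (c : ℝ) :
    ∑ a, q a * (c * v a) = c * ∑ a, q a * v a := by
  rw [Finset.mul_sum]
  exact Finset.sum_congr rfl fun a _ => by ring

lemma sum_weight_add {ι : Type*} [Fintype ι] (q : ι → ℝ) (h1 : ∑ a, q a = 1) (c : ℝ)
    (v : ι → ℝ) : ∑ a, q a * (c + v a) = c + ∑ a, q a * v a := by
  rw [Finset.sum_congr rfl fun a _ => mul_add (q a) c (v a), Finset.sum_add_distrib,
    ← Finset.sum_mul, h1, one_mul]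

lemma dd_moment (hpos : ∀ i, 0 < p i) (hsum : ∑ i, p i = 1) (N : ℕ) (i : Fin k) :
    (∑ σ : Fin N → Fin k, w p σ * (dd (N+1) (p i) (cnt i σ))^2) * ((N:ℝ)+1)^2
      ≤ 4/(Real.exp 1)^2 + (1 + Real.log (1/p i))^2 := by
  have hnn : ∀ i, 0 ≤ p i := fun i => le_of_lt (hpos i)
  have hp1 : p i ≤ 1 := by
    have h := Finset.single_le_sum (f := p) (fun j _ => hnn j) (Finset.mem_univ i)
    rw [hsum] at h; exact h
  have he2 : (0:ℝ) < (Real.exp 1)^2 := by positivity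
  have hE := exp_inv_cnt p hnn hsum N i
  set n : ℝ := (N:ℝ)+1 with hndef
  have hn0 : (0:ℝ) < n := by positivity
  set A : ℝ := 4/(Real.exp 1)^2 with hAdef
  have hA0 : 0 ≤ A := by rw [hAdef]; positivity
  set U : ℝ := 1 + Real.log (1/p i) with hUdef
  have pointwise : ∀ σ : Fin N → Fin k, (dd (N+1) (p i) (cnt i σ))^2 * n^2
      ≤ A * n * p i * (1/((cnt i σ:ℝ)+1)) + U^2 := by
    intro σ
    have h1 := dd_sq_le N (p i) (hpos i) hp1 (cnt i σ) (cnt_le i σ)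
    have h2 := max_log_sq_le (n * p i / ((cnt i σ:ℝ)+1))
      (div_pos (mul_pos hn0 (hpos i)) (by positivity))
    have hT2 : (max 0 (Real.log (n * p i / ((cnt i σ:ℝ)+1))))^2
        ≤ A * n * p i * (1/((cnt i σ:ℝ)+1)) := by
      rw [show A * n * p i * (1/((cnt i σ:ℝ)+1))
          = 4 * (n * p i / ((cnt i σ:ℝ)+1)) / (Real.exp 1)^2 by rw [hAdef]; ring,
        le_div_iff₀ he2]
      exact h2
    linarith
  calc (∑ σ : Fin N → Fin k, w p σ * (dd (N+1) (p i) (cnt i σ))^2) * n^2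
      = ∑ σ : Fin N → Fin k, w p σ * ((dd (N+1) (p i) (cnt i σ))^2 * n^2) := by
        rw [Finset.sum_mul]
        exact Finset.sum_congr rfl fun σ _ => by ring
    _ ≤ ∑ σ : Fin N → Fin k, w p σ * (A * n * p i * (1/((cnt i σ:ℝ)+1)) + U^2) := by
        refine Finset.sum_le_sum fun σ _ => ?_
        exact mul_le_mul_of_nonneg_left (pointwise σ) (w_nonneg p hnn σ)
    _ = ∑ σ : Fin N → Fin k, (w p σ * ((A * n * p i) * (1/((cnt i σ:ℝ)+1))) + U^2 * w p σ) :=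
        Finset.sum_congr rfl fun σ _ => by ring
    _ = (A * n * p i) * (∑ σ : Fin N → Fin k, w p σ * (1/((cnt i σ:ℝ)+1)))
          + U^2 * ∑ σ : Fin N → Fin k, w p σ := by
        rw [Finset.sum_add_distrib, sum_mul_left]
        simp only [← Finset.mul_sum]
    _ ≤ A * 1 + U^2 * 1 := by
        have h5 := mul_le_mul_of_nonneg_left hE hA0
        rw [sum_w p hsum N]
        rw [show (A * n * p i) * (∑ σ : Fin N → Fin k, w p σ * (1/((cnt i σ:ℝ)+1)))
            = A * (n * p i * ∑ σ : Fin N → Fin k, w p σ * (1/((cnt i σ:ℝ)+1))) by ring]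
        push_cast at h5 ⊢
        linarith
    _ = A + U^2 := by ring

lemma numeric_final (x : ℝ) (hx : 0 ≤ x) :
    2 * (4/(Real.exp 1)^2 + (1 + Real.exp (-3)) * (4+x)^2) ≤ 6 * (3+x)^2 := by
  have he := Real.exp_one_gt_d9
  have he2 : (7:ℝ) ≤ (Real.exp 1)^2 := by nlinarith
  have h47 : 4/(Real.exp 1)^2 ≤ 4/7 :=
    div_le_div_of_nonneg_left (by norm_num) (by norm_num) he2
  have hexp3 : Real.exp (-3) ≤ 1/19 := by
    rw [Real.exp_neg]
    have hE3 : Real.exp 3 = Real.exp 1 * Real.exp 1 * Real.exp 1 := by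
      rw [← Real.exp_add, ← Real.exp_add]; norm_num
    have h19 : (19:ℝ) ≤ Real.exp 3 := by nlinarith
    rw [show (1:ℝ)/19 = ((19:ℝ))⁻¹ by norm_num]
    exact inv_anti₀ (by norm_num) h19
  have hB0 : 0 ≤ Real.exp (-3) := (Real.exp_pos _).le
  nlinarith [sq_nonneg (4+x), sq_nonneg x,
    mul_le_mul_of_nonneg_right hexp3 (sq_nonneg (4+x))]

end KLVar

open KLVar in
/-- Variance upper bound: `Var[D(P̂_{n,k}‖P)] ≤ 6(3 + log k)²/n`. -/
theorem kl_variance_le_log_sq (n k : ℕ) (hn : 1 ≤ n) (hk : 2 ≤ k)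
    (p : Fin k → ℝ) (hpos : ∀ i, 0 < p i) (hsum : ∑ i, p i = 1) :
    var p (fun ω : Fin n → Fin k => klDiv (empDist ω) p) ≤
      6 * (3 + Real.log k) ^ 2 / n := by
  obtain ⟨N, rfl⟩ : ∃ N, n = N + 1 := ⟨n - 1, (Nat.succ_pred_eq_of_pos hn).symm⟩
  have hnn : ∀ i, 0 ≤ p i := fun i => le_of_lt (hpos i)
  set nr : ℝ := (N:ℝ)+1 with hnrdef
  have hnr0 : (0:ℝ) < nr := by positivity
  set D : (Fin (N+1) → Fin k) → ℝ := fun ω => klDiv (empDist ω) p with hD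
  set lx : ℝ := Real.log (k:ℝ) with hlx
  have hlx0 : 0 ≤ lx := Real.log_nonneg (by exact_mod_cast le_trans one_le_two hk)
  have hES := efron_stein p hnn hsum (N+1) D
  -- all coordinates give the same term
  have hTj : ∀ j : Fin (N+1),
      (∑ ω : Fin (N+1) → Fin k, w p ω * ∑ x, p x * (D ω - D (Function.update ω j x))^2)
        = ∑ ω : Fin (N+1) → Fin k, w p ω * ∑ x, p x * (D ω - D (Function.update ω 0 x))^2 := by
    intro j
    rw [sum_comp_perm (Equiv.swap 0 j)
      (fun ω => w p ω * ∑ x, p x * (D ω - D (Function.update ω j x))^2)]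
    refine Finset.sum_congr rfl fun ω _ => ?_
    have hDinv : ∀ (τ : Fin (N+1) → Fin k) (e : Equiv.Perm (Fin (N+1))), D (τ ∘ e) = D τ := by
      intro τ e
      rw [hD]
      simp only
      rw [empDist_comp]
    rw [w_comp]
    congr 1
    refine Finset.sum_congr rfl fun x _ => ?_
    have hupd : Function.update (ω ∘ (Equiv.swap 0 j)) j x
        = (Function.update ω 0 x) ∘ (Equiv.swap 0 j) := by
      rw [← update_comp ω (Equiv.swap 0 j) j x, Equiv.swap_apply_right]
    rw [hDinv ω (Equiv.swap 0 j), hupd, hDinv (Function.update ω 0 x) (Equiv.swap 0 j)]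
  set T0 : ℝ := ∑ ω : Fin (N+1) → Fin k, w p ω * ∑ x, p x * (D ω - D (Function.update ω 0 x))^2
    with hT0def
  have hsumTj : ∑ j : Fin (N+1), (∑ ω : Fin (N+1) → Fin k,
      w p ω * ∑ x, p x * (D ω - D (Function.update ω j x))^2) = nr * T0 := by
    rw [Finset.sum_congr rfl fun j _ => hTj j, Finset.sum_const, Finset.card_univ,
      Fintype.card_fin, nsmul_eq_mul]
    push_cast
    rfl
  -- per-symbol second moments
  set M : Fin k → ℝ := fun i => ∑ σ : Fin N → Fin k, w p σ * (dd (N+1) (p i) (cnt i σ))^2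
    with hM
  have hM0 : ∀ i, 0 ≤ M i := fun i =>
    Finset.sum_nonneg fun σ _ => mul_nonneg (w_nonneg p hnn σ) (sq_nonneg _)
  -- split off the first coordinate in T0 and bound
  have hT0le : T0 ≤ 4 * ∑ i, p i * M i := by
    have hT0split : T0 = ∑ a, ∑ σ : Fin N → Fin k, (p a * w p σ)
        * ∑ b, p b * (dd (N+1) (p a) (cnt a σ) - dd (N+1) (p b) (cnt b σ))^2 := by
      rw [hT0def, sum_cons (fun ω => w p ω * ∑ x, p x * (D ω - D (Function.update ω 0 x))^2)]
      refine Finset.sum_congr rfl fun a _ => Finset.sum_congr rfl fun σ _ => ?_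
      rw [w_cons]
      congr 1
      refine Finset.sum_congr rfl fun b _ => ?_
      rw [Fin.update_cons_zero, hD]
      simp only
      rw [D_diff]
    set V : (Fin N → Fin k) → ℝ := fun σ => ∑ b, p b * (dd (N+1) (p b) (cnt b σ))^2 with hV
    have hVS : ∑ σ : Fin N → Fin k, w p σ * V σ = ∑ i, p i * M i := by
      rw [hV]
      simp only
      rw [Finset.sum_congr rfl fun (σ : Fin N → Fin k) _ =>
        Finset.mul_sum Finset.univ (fun b => p b * (dd (N+1) (p b) (cnt b σ))^2) (w p σ),
        Finset.sum_comm]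
      refine Finset.sum_congr rfl fun i _ => ?_
      rw [hM]
      simp only
      rw [Finset.mul_sum]
      exact Finset.sum_congr rfl fun σ _ => by ring
    have step1 : T0 ≤ ∑ a, ∑ σ : Fin N → Fin k, (p a * w p σ)
        * (2 * (dd (N+1) (p a) (cnt a σ))^2 + 2 * V σ) := by
      rw [hT0split]
      refine Finset.sum_le_sum fun a _ => Finset.sum_le_sum fun σ _ => ?_
      refine mul_le_mul_of_nonneg_left ?_ (mul_nonneg (hnn a) (w_nonneg p hnn σ))
      calc ∑ b, p b * (dd (N+1) (p a) (cnt a σ) - dd (N+1) (p b) (cnt b σ))^2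
          ≤ ∑ b, p b * (2 * (dd (N+1) (p a) (cnt a σ))^2 + 2 * (dd (N+1) (p b) (cnt b σ))^2) := by
            refine Finset.sum_le_sum fun b _ => ?_
            refine mul_le_mul_of_nonneg_left ?_ (hnn b)
            nlinarith [sq_nonneg (dd (N+1) (p a) (cnt a σ) + dd (N+1) (p b) (cnt b σ))]
        _ = 2 * (dd (N+1) (p a) (cnt a σ))^2 + 2 * V σ := by
            rw [sum_weight_add p hsum _ _, sum_mul_left p _ 2]
    have step2 : ∑ a, ∑ σ : Fin N → Fin k, (p a * w p σ)
        * (2 * (dd (N+1) (p a) (cnt a σ))^2 + 2 * V σ) = 4 * ∑ i, p i * M i := by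
      have inner : ∀ a, ∑ σ : Fin N → Fin k, (p a * w p σ)
          * (2 * (dd (N+1) (p a) (cnt a σ))^2 + 2 * V σ)
            = p a * (2 * M a + 2 * ∑ i, p i * M i) := by
        intro a
        rw [Finset.sum_congr rfl fun (σ : Fin N → Fin k) _ => (by ring :
          (p a * w p σ) * (2 * (dd (N+1) (p a) (cnt a σ))^2 + 2 * V σ)
            = p a * (w p σ * (2 * (dd (N+1) (p a) (cnt a σ))^2) + w p σ * (2 * V σ))),
          ← Finset.mul_sum]
        congr 1
        rw [Finset.sum_add_distrib,
          sum_mul_left (w p) (fun σ => (dd (N+1) (p a) (cnt a σ))^2) 2,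
          sum_mul_left (w p) V 2, hVS, hM]
      rw [Finset.sum_congr rfl fun a _ => inner a,
        Finset.sum_congr rfl fun a _ => (by ring :
          p a * (2 * M a + 2 * ∑ i, p i * M i)
            = p a * ((2 * ∑ i, p i * M i) + 2 * M a)),
        sum_weight_add p hsum (2 * ∑ i, p i * M i) (fun a => 2 * M a),
        sum_mul_left p M 2]
      ring
    linarith [step1, le_of_eq step2]
  -- assemble
  have hSp := sum_p_logsq_le p hpos hsum (le_trans one_le_two hk)
  set C : ℝ := 4/(Real.exp 1)^2 + (1 + Real.exp (-3)) * (4+lx)^2 with hC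
  have hC0 : 0 ≤ C := by rw [hC]; positivity
  have hPM : (∑ i, p i * M i) * nr^2 ≤ C := by
    calc (∑ i, p i * M i) * nr^2 = ∑ i, p i * (M i * nr^2) := by
          rw [Finset.sum_mul]; exact Finset.sum_congr rfl fun i _ => by ring
      _ ≤ ∑ i, p i * (4/(Real.exp 1)^2 + (1 + Real.log (1/p i))^2) := by
          refine Finset.sum_le_sum fun i _ => mul_le_mul_of_nonneg_left ?_ (hnn i)
          exact dd_moment p hpos hsum N i
      _ = 4/(Real.exp 1)^2 + ∑ i, p i * (1 + Real.log (1/p i))^2 :=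
          sum_weight_add p hsum _ _
      _ ≤ C := by rw [hC]; linarith [hSp]
  have hPMdiv : ∑ i, p i * M i ≤ C / nr^2 := by
    rw [le_div_iff₀ (by positivity)]
    exact hPM
  have hvar1 : var p D ≤ 1/2 * (nr * T0) := by rw [← hsumTj]; exact hES
  have hvar2 : var p D ≤ 1/2 * (nr * (4 * (C / nr^2))) := by
    have l1 : T0 ≤ 4 * (C/nr^2) := le_trans hT0le (by linarith [hPMdiv])
    have l2 : nr * T0 ≤ nr * (4 * (C/nr^2)) := mul_le_mul_of_nonneg_left l1 hnr0.le
    linarith [hvar1]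
  have heq : 1/2 * (nr * (4 * (C / nr^2))) = 2 * C / nr := by field_simp; ring
  have hnum := numeric_final lx hlx0
  have hfinal : 2 * C / nr ≤ 6 * (3 + lx)^2 / nr := by
    refine (div_le_div_iff_of_pos_right hnr0).mpr ?_
    rw [hC] at *
    linarith [hnum]
  calc var p D ≤ 2 * C / nr := by rw [← heq]; exact hvar2
    _ ≤ 6 * (3 + lx)^2 / nr := hfinal
    _ = 6 * (3 + lx)^2 / ((N+1 : ℕ):ℝ) := by rw [hnrdef]; push_cast; ring
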